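/- Let K_n be the set of n×n lower triangular (0,1)-matrices with unit diagonal and L_n = {YY^T : Y ∈ K_n}. Let Z_0 = Y_0 Y_0^T where (Y_0)_{ij} = 0 if i < j, 1 if i = j, 1 if i > j with i+j odd, 0 otherwise. Then for every Z ∈ L_n, the smallest eigenvalue of Z_0 is less than or equal to the smallest eigenvalue of Z. Equivalently, c_n := min_{Z ∈ L_n} λ_min(Z) equals the smallest eigenvalue of Z_0. -/

import Mathlib

open Matrix

section IHMAux
open Finset


/-! Auxiliary lemmas for the Ilmonen–Haukkanen–Merikoski conjecture. -/

section Aux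

/-- Entry bound function: Fibonacci numbers. -/
noncomputable def IHMg (e : ℕ) : ℝ := if e = 0 then 1 else (Nat.fib e : ℝ)

lemma IHMg_nonneg (e : ℕ) : 0 ≤ IHMg e := by
  unfold IHMg; split <;> positivity

lemma IHM_sign {a b : ℕ} (h : a % 2 ≠ b % 2) : ((-1 : ℝ))^a = -((-1 : ℝ))^b := by
  rcases Nat.even_or_odd a with ha | ha
  · have hb : Odd b := by
      rw [Nat.even_iff] at ha; rw [Nat.odd_iff]; omega
    simp [ha.neg_one_pow, hb.neg_one_pow]
  · have hb : Even b := by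
      rw [Nat.odd_iff] at ha; rw [Nat.even_iff]; omega
    simp [ha.neg_one_pow, hb.neg_one_pow]

lemma IHM_sign_eq {a b : ℕ} (h : a % 2 = b % 2) : ((-1 : ℝ))^a = ((-1 : ℝ))^b := by
  rcases Nat.even_or_odd a with ha | ha
  · have hb : Even b := by rw [Nat.even_iff] at ha ⊢; omega
    rw [ha.neg_one_pow, hb.neg_one_pow]
  · have hb : Odd b := by rw [Nat.odd_iff] at ha ⊢; omega
    rw [ha.neg_one_pow, hb.neg_one_pow]

lemma IHM_subconvex_le (s : Finset ℕ) (c a : ℕ → ℝ) (hc : ∀ k, 0 ≤ c k ∧ c k ≤ 1) :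
    ∑ k ∈ s, c k * a k ≤ ∑ k ∈ s, max (a k) 0 := by
  apply Finset.sum_le_sum
  intro k _
  calc c k * a k ≤ c k * max (a k) 0 :=
        mul_le_mul_of_nonneg_left (le_max_left _ _) (hc k).1
    _ ≤ 1 * max (a k) 0 :=
        mul_le_mul_of_nonneg_right (hc k).2 (le_max_right _ _)
    _ = max (a k) 0 := one_mul _

/-- The key Fibonacci invariant lemma. -/
lemma IHM_fib_entry_bound (a : ℕ → ℝ) (j : ℕ) (haj : a j = 1)
    (hrec : ∀ m, j < m → ∃ c : ℕ → ℝ, (∀ k, 0 ≤ c k ∧ c k ≤ 1) ∧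
      a m = -∑ k ∈ Finset.Ico j m, c k * a k) :
    ∀ m, j < m → |a m| ≤ (Nat.fib (m - j) : ℝ) := by
  set P : ℕ → ℝ := fun m => ∑ k ∈ Finset.Ico j (m+1), max (a k) 0 with hP
  set N : ℕ → ℝ := fun m => ∑ k ∈ Finset.Ico j (m+1), max (-a k) 0 with hN
  have hbound : ∀ m, j < m → -P (m-1) ≤ a m ∧ a m ≤ N (m-1) := by
    intro m hm
    obtain ⟨c, hc, hac⟩ := hrec m hm
    have hIco : Finset.Ico j ((m-1)+1) = Finset.Ico j m := by congr 1; omega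
    constructor
    · rw [hac, neg_le_neg_iff, hP]
      simp only [hIco]
      exact IHM_subconvex_le _ _ _ hc
    · rw [hac, hN]
      simp only [hIco]
      have := IHM_subconvex_le (Finset.Ico j m) c (fun k => -(a k)) hc
      simp only [mul_neg, Finset.sum_neg_distrib] at this
      linarith
  have hinv : ∀ m, j ≤ m → max (P m) (N m) ≤ (Nat.fib (m - j + 1) : ℝ) ∧
      P m + N m ≤ (Nat.fib (m - j + 2) : ℝ) := by
    intro m hm
    induction m, hm using Nat.le_induction with
    | base =>
        have h1 : Finset.Ico j (j+1) = {j} := by ext k; simp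
        have hPj : P j = 1 := by rw [hP]; simp [h1, haj]
        have hNj : N j = 0 := by rw [hN]; simp [h1, haj]
        simp [hPj, hNj, Nat.sub_self]
    | succ m hm ih =>
        have hbm := hbound (m+1) (by omega)
        have hm1 : (m+1) - 1 = m := by omega
        rw [hm1] at hbm
        have hPsucc : P (m+1) = P m + max (a (m+1)) 0 := by
          rw [hP]; exact Finset.sum_Ico_succ_top (by omega) _
        have hNsucc : N (m+1) = N m + max (-a (m+1)) 0 := by
          rw [hN]; exact Finset.sum_Ico_succ_top (by omega) _
        have hd1 : (m+1) - j + 1 = (m - j + 1) + 1 := by omega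
        have hd2 : (m+1) - j + 2 = (m - j + 2) + 1 := by omega
        have hfib1 : (Nat.fib (m - j + 1) : ℝ) ≤ (Nat.fib (m - j + 2) : ℝ) := by
          exact_mod_cast Nat.fib_le_fib_succ
        have hfadd1 : (Nat.fib ((m+1) - j + 1) : ℝ) = Nat.fib (m - j + 2) := by rw [hd1]
        have hfadd2 : (Nat.fib ((m+1) - j + 2) : ℝ)
            = (Nat.fib (m - j + 1) : ℝ) + Nat.fib (m - j + 2) := by
          rw [hd2]
          have : Nat.fib ((m - j + 2) + 1) = Nat.fib (m - j + 1) + Nat.fib (m - j + 2) := by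
            rw [show m - j + 2 + 1 = (m - j + 1) + 2 by omega, Nat.fib_add_two]
          exact_mod_cast this
        rcases le_total 0 (a (m+1)) with hpos | hneg
        · have h1 : max (a (m+1)) 0 = a (m+1) := max_eq_left hpos
          have h2 : max (-a (m+1)) 0 = 0 := max_eq_right (by linarith)
          rw [hPsucc, hNsucc, h1, h2, hfadd1, hfadd2]
          constructor
          · apply max_le
            · have := hbm.2; have := ih.2; linarith
            · have := le_max_right (P m) (N m); have := ih.1; linarith
          · have := hbm.2; have h3 := ih.1; have h4 := ih.2
            have h5 : N m ≤ max (P m) (N m) := le_max_right _ _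
            linarith
        · have h1 : max (a (m+1)) 0 = 0 := max_eq_right hneg
          have h2 : max (-a (m+1)) 0 = -a (m+1) := max_eq_left (by linarith)
          rw [hPsucc, hNsucc, h1, h2, hfadd1, hfadd2]
          constructor
          · apply max_le
            · have := le_max_left (P m) (N m); have := ih.1; linarith
            · have := hbm.1; have := ih.2; linarith
          · have := hbm.1; have h3 := ih.1; have h4 := ih.2
            have h5 : P m ≤ max (P m) (N m) := le_max_left _ _
            linarith
  intro m hm
  have hbm := hbound m hm
  have hinvm := hinv (m-1) (by omega)
  have hd : (m-1) - j + 1 = m - j := by omega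
  rw [hd] at hinvm
  have h1 : P (m-1) ≤ (Nat.fib (m-j) : ℝ) := le_trans (le_max_left _ _) hinvm.1
  have h2 : N (m-1) ≤ (Nat.fib (m-j) : ℝ) := le_trans (le_max_right _ _) hinvm.1
  rw [abs_le]
  exact ⟨by linarith [hbm.1], by linarith [hbm.2]⟩

lemma IHM_fib_alt_sum : ∀ d : ℕ, 1 ≤ d →
    (∑ e ∈ Finset.range d, if e % 2 ≠ d % 2 then (if e = 0 then 1 else Nat.fib e) else 0)
      = Nat.fib d := by
  intro d
  induction d using Nat.strong_induction_on with
  | _ d ih =>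
    intro hd
    match d, hd with
    | 1, _ => decide
    | 2, _ => decide
    | (k+3), _ =>
      have h1 := ih (k+1) (by omega) (by omega)
      rw [Finset.sum_range_succ, Finset.sum_range_succ]
      have e1 : (if (k+1) % 2 ≠ (k+3) % 2 then (if (k+1) = 0 then 1 else Nat.fib (k+1)) else 0) = 0 := by
        have : (k+1) % 2 = (k+3) % 2 := by omega
        simp [this]
      have e2 : (if (k+2) % 2 ≠ (k+3) % 2 then (if (k+2) = 0 then 1 else Nat.fib (k+2)) else 0)
          = Nat.fib (k+2) := by
        have h : (k+2) % 2 ≠ (k+3) % 2 := by omega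
        rw [if_pos h, if_neg (by omega : ¬ (k+2) = 0)]
      have e3 : (∑ e ∈ Finset.range (k+1),
            if e % 2 ≠ (k+3) % 2 then (if e = 0 then 1 else Nat.fib e) else 0)
          = ∑ e ∈ Finset.range (k+1),
            if e % 2 ≠ (k+1) % 2 then (if e = 0 then 1 else Nat.fib e) else 0 := by
        apply Finset.sum_congr rfl
        intro e _
        have hp : (k+3) % 2 = (k+1) % 2 := by omega
        simp only [hp]
      rw [e1, e2, e3, h1]
      have : Nat.fib (k+3) = Nat.fib (k+1) + Nat.fib (k+2) := by
        rw [show k+3 = (k+1)+2 by ring, Nat.fib_add_two]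
      omega

end Aux

section Tri

variable {n : ℕ}

lemma IHM_det_one (Y : Matrix (Fin n) (Fin n) ℝ)
    (hlower : ∀ i j, i < j → Y i j = 0) (hdiag : ∀ i, Y i i = 1) :
    Y.det = 1 := by
  have hbt : Y.BlockTriangular OrderDual.toDual := by
    intro i j h
    exact hlower i j (by exact h)
  rw [Matrix.det_of_lowerTriangular Y hbt]
  simp [hdiag]

/-- Structure facts about the inverse of a unit lower triangular (0,1) matrix. -/
lemma IHM_inv_facts (Y : Matrix (Fin n) (Fin n) ℝ)
    (hlower : ∀ i j, i < j → Y i j = 0) (hdiag : ∀ i, Y i i = 1) :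
    Y * Y⁻¹ = 1 ∧ (∀ i j : Fin n, i < j → Y⁻¹ i j = 0) ∧ (∀ i, Y⁻¹ i i = 1) := by
  have hdet : Y.det = 1 := IHM_det_one Y hlower hdiag
  have hu : IsUnit Y.det := by rw [hdet]; exact isUnit_one
  have hbt : Y.BlockTriangular OrderDual.toDual := fun i j h => hlower i j (by exact h)
  haveI := Y.invertibleOfIsUnitDet hu
  have h1 : Y * Y⁻¹ = 1 := Matrix.mul_nonsing_inv Y hu
  have hAbt : (Y⁻¹).BlockTriangular OrderDual.toDual :=
    Matrix.blockTriangular_inv_of_blockTriangular hbt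
  have hAlow : ∀ i j : Fin n, i < j → Y⁻¹ i j = 0 := fun i j h => hAbt (by exact h)
  refine ⟨h1, hAlow, fun i => ?_⟩
  have := congrFun (congrFun h1 i) i
  rw [Matrix.mul_apply] at this
  rw [Matrix.one_apply_eq] at this
  rw [Finset.sum_eq_single i] at this
  · rw [hdiag i, one_mul] at this; exact this
  · intro k _ hk
    rcases lt_or_gt_of_ne hk with h | h
    · rw [hAlow k i h, mul_zero]
    · rw [hlower i k h, zero_mul]
  · intro h; exact absurd (Finset.mem_univ i) h

/-- Fibonacci bound on the entries of the inverse. -/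
lemma IHM_inv_bound (Y : Matrix (Fin n) (Fin n) ℝ)
    (hlower : ∀ i j, i < j → Y i j = 0)
    (h01 : ∀ i j, Y i j = 0 ∨ Y i j = 1) (hdiag : ∀ i, Y i i = 1) :
    ∀ i j : Fin n, |Y⁻¹ i j| ≤
      (if (i : ℕ) = (j : ℕ) then 1 else (Nat.fib ((i : ℕ) - (j : ℕ)) : ℝ)) := by
  obtain ⟨h1, hAlow, hAdiag⟩ := IHM_inv_facts Y hlower hdiag
  intro i j
  rcases lt_trichotomy i j with hij | hij | hij
  · rw [hAlow i j hij]
    have hlt : (i : ℕ) < (j : ℕ) := hij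
    rw [if_neg (by omega), Nat.sub_eq_zero_of_le (by omega)]
    simp
  · subst hij
    rw [hAdiag, if_pos rfl]
    norm_num
  · rw [if_neg (by omega : ¬ (i:ℕ) = (j:ℕ))]
    -- apply the ℕ-level lemma
    set a : ℕ → ℝ := fun m => if h : m < n then Y⁻¹ ⟨m, h⟩ j else 0 with ha
    have haj : a (j : ℕ) = 1 := by
      rw [ha]; simp only [j.isLt, dif_pos]; rw [Fin.eta]; exact hAdiag j
    have hrec : ∀ m, (j : ℕ) < m → ∃ c : ℕ → ℝ, (∀ k, 0 ≤ c k ∧ c k ≤ 1) ∧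
        a m = -∑ k ∈ Finset.Ico (j : ℕ) m, c k * a k := by
      intro m hm
      by_cases hmn : m < n
      · set im : Fin n := ⟨m, hmn⟩ with him
        refine ⟨fun k => if h : k < n then Y im ⟨k, h⟩ else 0, ?_, ?_⟩
        · intro k
          by_cases h : k < n
          · simp only [dif_pos h]
            rcases h01 im ⟨k, h⟩ with h' | h' <;> rw [h'] <;> norm_num
          · simp only [dif_neg h]; norm_num
        · -- from (Y * Y⁻¹) im j = 0
          have him_ne : im ≠ j := by
            intro h; rw [← h] at hm; simp [him] at hm
          have h0 := congrFun (congrFun h1 im) j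
          rw [Matrix.mul_apply, Matrix.one_apply_ne him_ne] at h0
          -- convert the Fin sum to a ℕ range sum
          have hsum : (∑ k : Fin n, Y im k * Y⁻¹ k j) =
              ∑ k ∈ Finset.range n,
                (if h : k < n then Y im ⟨k, h⟩ * Y⁻¹ ⟨k, h⟩ j else 0) := by
            rw [← Fin.sum_univ_eq_sum_range]
            apply Finset.sum_congr rfl
            intro k _
            simp only [k.isLt, dif_pos, Fin.eta]
          rw [hsum] at h0
          -- shrink to Ico j (m+1)
          have hsub : (∑ k ∈ Finset.range n,
                (if h : k < n then Y im ⟨k, h⟩ * Y⁻¹ ⟨k, h⟩ j else 0)) =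
              ∑ k ∈ Finset.Ico (j : ℕ) (m+1),
                (if h : k < n then Y im ⟨k, h⟩ * Y⁻¹ ⟨k, h⟩ j else 0) := by
            apply (Finset.sum_subset ?_ ?_).symm
            · intro k hk
              rw [Finset.mem_Ico] at hk
              rw [Finset.mem_range]; omega
            · intro k hk hk'
              rw [Finset.mem_range] at hk
              rw [Finset.mem_Ico] at hk'
              simp only [dif_pos hk]
              rcases lt_or_ge k (j : ℕ) with h | h
              · rw [hAlow ⟨k, hk⟩ j (by exact h), mul_zero]
              · have hkm : m < k := by omega
                rw [hlower im ⟨k, hk⟩ (by simpa [him] using hkm), zero_mul]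
          rw [hsub, Finset.sum_Ico_succ_top (by omega : (j:ℕ) ≤ m)] at h0
          simp only [dif_pos hmn] at h0
          have htop : Y im ⟨m, hmn⟩ * Y⁻¹ ⟨m, hmn⟩ j = a m := by
            rw [ha]; simp only [dif_pos hmn]
            rw [show (⟨m, hmn⟩ : Fin n) = im from rfl, hdiag im, one_mul]
          rw [htop] at h0
          have : a m = -∑ k ∈ Finset.Ico (j:ℕ) m,
              (if h : k < n then Y im ⟨k, h⟩ * Y⁻¹ ⟨k, h⟩ j else 0) := by linarith
          rw [this]
          congr 1
          apply Finset.sum_congr rfl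
          intro k hk
          rw [Finset.mem_Ico] at hk
          have hkn : k < n := by omega
          simp only [dif_pos hkn]
          rw [ha]; simp only [dif_pos hkn]
      · refine ⟨fun _ => 0, fun k => by norm_num, ?_⟩
        rw [ha]; simp only [dif_neg hmn]
        simp
    have := IHM_fib_entry_bound a (j : ℕ) haj hrec (i : ℕ) (by exact_mod_cast hij)
    rw [ha] at this
    simp only [i.isLt, dif_pos, Fin.eta] at this
    exact this

end Tri

section YZero

lemma IHM_Y0_inv (n : ℕ) (Y₀ : Matrix (Fin n) (Fin n) ℝ)
    (hY₀ : ∀ i j : Fin n, Y₀ i j = if i < j then 0 else if i = j then 1 else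
        if (i : ℕ) % 2 ≠ (j : ℕ) % 2 then 1 else 0) :
    Y₀ * (Matrix.of fun i j : Fin n => ((-1:ℝ))^((i:ℕ)+(j:ℕ)) *
      (if (i:ℕ) = (j:ℕ) then 1 else (Nat.fib ((i:ℕ) - (j:ℕ)) : ℝ))) = 1 := by
  set C : Matrix (Fin n) (Fin n) ℝ := Matrix.of fun i j : Fin n =>
    ((-1:ℝ))^((i:ℕ)+(j:ℕ)) *
      (if (i:ℕ) = (j:ℕ) then 1 else (Nat.fib ((i:ℕ) - (j:ℕ)) : ℝ)) with hC
  have hCapp : ∀ k l : Fin n, C k l = ((-1:ℝ))^((k:ℕ)+(l:ℕ)) *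
      (if (k:ℕ) = (l:ℕ) then 1 else (Nat.fib ((k:ℕ) - (l:ℕ)) : ℝ)) := fun k l => rfl
  have hCzero : ∀ k l : Fin n, (k:ℕ) < (l:ℕ) → C k l = 0 := by
    intro k l h
    rw [hCapp, if_neg (by omega), Nat.sub_eq_zero_of_le (by omega)]
    simp
  have hY₀zero : ∀ k l : Fin n, k < l → Y₀ k l = 0 := by
    intro k l h; rw [hY₀, if_pos h]
  have hY₀diag : ∀ k : Fin n, Y₀ k k = 1 := by
    intro k; rw [hY₀, if_neg (lt_irrefl k), if_pos rfl]
  ext i j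
  rw [Matrix.mul_apply]
  rcases lt_trichotomy i j with hij | hij | hij
  · rw [Matrix.one_apply_ne (ne_of_lt hij)]
    apply Finset.sum_eq_zero
    intro k _
    rcases lt_or_ge (k:ℕ) (j:ℕ) with h | h
    · rw [hCzero k j h, mul_zero]
    · rw [hY₀zero i k (by rw [Fin.lt_def]; omega), zero_mul]
  · subst hij
    rw [Matrix.one_apply_eq]
    rw [Finset.sum_eq_single i]
    · rw [hY₀diag, hCapp, if_pos rfl, mul_one, one_mul]
      exact Even.neg_one_pow ⟨(i:ℕ), rfl⟩
    · intro k _ hk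
      rcases lt_or_gt_of_ne hk with h | h
      · rw [hCzero k i (by exact h), mul_zero]
      · rw [hY₀zero i k h, zero_mul]
    · intro h; exact absurd (Finset.mem_univ i) h
  · -- main case : i > j
    rw [Matrix.one_apply_ne (ne_of_gt hij)]
    have hji : (j:ℕ) < (i:ℕ) := hij
    set d : ℕ := (i:ℕ) - (j:ℕ) with hd
    have hid : (i:ℕ) = (j:ℕ) + d := by omega
    have hd1 : 1 ≤ d := by omega
    -- convert to ℕ sum
    have hsum : (∑ k : Fin n, Y₀ i k * C k j) =
        ∑ k ∈ Finset.range n, (if h : k < n then Y₀ i ⟨k, h⟩ * C ⟨k, h⟩ j else 0) := by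
      rw [← Fin.sum_univ_eq_sum_range]
      apply Finset.sum_congr rfl
      intro k _
      simp only [k.isLt, dif_pos, Fin.eta]
    rw [hsum]
    have hsub : (∑ k ∈ Finset.range n,
          (if h : k < n then Y₀ i ⟨k, h⟩ * C ⟨k, h⟩ j else 0)) =
        ∑ k ∈ Finset.Ico (j:ℕ) ((i:ℕ)+1),
          (if h : k < n then Y₀ i ⟨k, h⟩ * C ⟨k, h⟩ j else 0) := by
      apply (Finset.sum_subset ?_ ?_).symm
      · intro k hk
        rw [Finset.mem_Ico] at hk
        rw [Finset.mem_range]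
        have := i.isLt; omega
      · intro k hk hk'
        rw [Finset.mem_range] at hk
        rw [Finset.mem_Ico] at hk'
        simp only [dif_pos hk]
        rcases lt_or_ge k (j:ℕ) with h | h
        · rw [hCzero ⟨k, hk⟩ j (by simpa using h), mul_zero]
        · rw [hY₀zero i ⟨k, hk⟩ (by rw [Fin.lt_def]; simp; omega), zero_mul]
    rw [hsub, Finset.sum_Ico_eq_sum_range]
    have hrange : (i:ℕ) + 1 - (j:ℕ) = d + 1 := by omega
    rw [hrange, Finset.sum_range_succ]
    -- the top term
    have htopn : (j:ℕ) + d < n := by have := i.isLt; omega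
    have htopfin : (⟨(j:ℕ)+d, htopn⟩ : Fin n) = i := by
      apply Fin.ext; simp [hid]
    have htop : (if h : (j:ℕ)+d < n then Y₀ i ⟨(j:ℕ)+d, h⟩ * C ⟨(j:ℕ)+d, h⟩ j else 0)
        = ((-1:ℝ))^((i:ℕ)+(j:ℕ)) * (Nat.fib d : ℝ) := by
      rw [dif_pos htopn, htopfin, hY₀diag, one_mul, hCapp,
        if_neg (by omega : ¬ (i:ℕ) = (j:ℕ))]
    rw [htop]
    -- the lower terms
    have hlow : (∑ e ∈ Finset.range d,
          (if h : (j:ℕ)+e < n then Y₀ i ⟨(j:ℕ)+e, h⟩ * C ⟨(j:ℕ)+e, h⟩ j else 0))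
        = -((-1:ℝ))^((i:ℕ)+(j:ℕ)) * (Nat.fib d : ℝ) := by
      have hcong : ∀ e ∈ Finset.range d,
          (if h : (j:ℕ)+e < n then Y₀ i ⟨(j:ℕ)+e, h⟩ * C ⟨(j:ℕ)+e, h⟩ j else 0)
          = -((-1:ℝ))^((i:ℕ)+(j:ℕ)) *
            (if e % 2 ≠ d % 2 then ((if e = 0 then 1 else Nat.fib e : ℕ) : ℝ) else 0) := by
        intro e he
        rw [Finset.mem_range] at he
        have hen : (j:ℕ)+e < n := by have := i.isLt; omega
        rw [dif_pos hen]
        have hY₀e : Y₀ i ⟨(j:ℕ)+e, hen⟩ =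
            if (i:ℕ) % 2 ≠ ((j:ℕ)+e) % 2 then 1 else 0 := by
          rw [hY₀, if_neg (by rw [Fin.lt_def]; simp; omega),
            if_neg (by intro h; apply_fun (Fin.val) at h; simp at h; omega)]
        have hCe : C ⟨(j:ℕ)+e, hen⟩ j = ((-1:ℝ))^(((j:ℕ)+e)+(j:ℕ)) *
            (if e = 0 then 1 else (Nat.fib e : ℝ)) := by
          rw [hCapp]
          congr 1
          by_cases h0 : e = 0
          · rw [if_pos (by omega : (j:ℕ)+e = (j:ℕ)), if_pos h0]
          · rw [if_neg (by omega : ¬ (j:ℕ)+e = (j:ℕ)), if_neg h0,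
              show (j:ℕ)+e-(j:ℕ) = e by omega]
        rw [hY₀e, hCe]
        by_cases hpar : e % 2 = d % 2
        · rw [if_neg (by omega : ¬ ((i:ℕ) % 2 ≠ ((j:ℕ)+e) % 2)),
            if_neg (by omega : ¬ (e % 2 ≠ d % 2))]
          ring
        · rw [if_pos (by omega : (i:ℕ) % 2 ≠ ((j:ℕ)+e) % 2),
            if_pos (by omega : e % 2 ≠ d % 2), one_mul]
          have hsign : ((-1:ℝ))^(((j:ℕ)+e)+(j:ℕ)) = -((-1:ℝ))^((i:ℕ)+(j:ℕ)) :=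
            IHM_sign (by omega)
          rw [hsign]
          by_cases h0 : e = 0 <;> simp [h0] <;> ring
      rw [Finset.sum_congr rfl hcong, ← Finset.mul_sum]
      congr 1
      have := IHM_fib_alt_sum d hd1
      have hcast : ((∑ e ∈ Finset.range d,
            if e % 2 ≠ d % 2 then (if e = 0 then 1 else Nat.fib e) else 0 : ℕ) : ℝ)
          = ∑ e ∈ Finset.range d,
            (if e % 2 ≠ d % 2 then ((if e = 0 then 1 else Nat.fib e : ℕ) : ℝ) else 0) := by
        push_cast
        rfl
      rw [← hcast, this]
    rw [hlow]
    ring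

end YZero

section Spec

variable {n : ℕ}

lemma IHM_spec_eig (M : Matrix (Fin n) (Fin n) ℝ) (μ : ℝ) (h : μ ∈ spectrum ℝ M) :
    ∃ v : Fin n → ℝ, v ≠ 0 ∧ M *ᵥ v = μ • v := by
  rw [spectrum.mem_iff] at h
  have hdet : (algebraMap ℝ (Matrix (Fin n) (Fin n) ℝ) μ - M).det = 0 := by
    by_contra hd
    exact h ((Matrix.isUnit_iff_isUnit_det _).mpr (isUnit_iff_ne_zero.mpr hd))
  obtain ⟨v, hv, hmv⟩ := Matrix.exists_mulVec_eq_zero_iff.mpr hdet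
  refine ⟨v, hv, ?_⟩
  rw [Matrix.sub_mulVec] at hmv
  have halg : algebraMap ℝ (Matrix (Fin n) (Fin n) ℝ) μ *ᵥ v = μ • v := by
    rw [Algebra.algebraMap_eq_smul_one, Matrix.smul_mulVec, Matrix.one_mulVec]
  rw [halg] at hmv
  exact (sub_eq_zero.mp hmv).symm
  
end Spec

section Ray
open Pointwise

variable {n : ℕ}

lemma IHM_rayleigh (M : Matrix (Fin n) (Fin n) ℝ) (hM : M.IsHermitian) (lam : ℝ)
    (hlb : ∀ μ ∈ spectrum ℝ M, lam ≤ μ) (x : Fin n → ℝ) :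
    lam * (x ⬝ᵥ x) ≤ x ⬝ᵥ (M *ᵥ x) := by
  have hW : (M - lam • 1).IsHermitian := by
    apply hM.sub
    unfold Matrix.IsHermitian
    ext a b
    simp [Matrix.conjTranspose_apply, Matrix.one_apply, eq_comm]
  have hpsd : (M - lam • 1).PosSemidef := by
    apply hW.posSemidef_iff_eigenvalues_nonneg.mpr
    intro i
    have hmem := hW.eigenvalues_mem_spectrum_real i
    have hspec : spectrum ℝ (M - lam • 1) = spectrum ℝ M - ({lam} : Set ℝ) := by
      rw [show M - lam • 1 = M - algebraMap ℝ (Matrix (Fin n) (Fin n) ℝ) lam from by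
        rw [Algebra.algebraMap_eq_smul_one]]
      exact (spectrum.sub_singleton_eq M lam).symm
    rw [hspec] at hmem
    obtain ⟨μ', hμ', t, ht, hsum⟩ := hmem
    rw [Set.mem_singleton_iff] at ht
    have h1 := hlb μ' hμ'
    rw [← hsum, ht]
    simp only []
    show (0:ℝ) ≤ μ' - lam
    linarith
  have h0 := hpsd.dotProduct_mulVec_nonneg x
  have hstar : star x = x := rfl
  rw [hstar, Matrix.sub_mulVec, Matrix.smul_mulVec, Matrix.one_mulVec,
    dotProduct_sub, dotProduct_smul] at h0
  have : lam • (x ⬝ᵥ x) = lam * (x ⬝ᵥ x) := rfl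
  linarith [h0, this ▸ h0]

end Ray

end IHMAux

/-- The Ilmonen–Haukkanen–Merikoski conjecture: the smallest eigenvalue of
`Z₀ = Y₀Y₀ᵀ` is less than or equal to the smallest eigenvalue of every
`Z = YYᵀ` with `Y` a lower triangular (0,1)-matrix with unit diagonal. -/
theorem stmt_15 (n : ℕ)
    (Y₀ : Matrix (Fin n) (Fin n) ℝ)
    (hY₀ : ∀ i j : Fin n, Y₀ i j =
      if i < j then 0 else if i = j then 1 else
        if (i : ℕ) % 2 ≠ (j : ℕ) % 2 then 1 else 0)
    (Z₀ : Matrix (Fin n) (Fin n) ℝ) (hZ₀ : Z₀ = Y₀ * Y₀ᵀ)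
    (lam₀ : ℝ) (hlam₀ : IsLeast (spectrum ℝ Z₀) lam₀)
    (Y : Matrix (Fin n) (Fin n) ℝ)
    (hlower : ∀ i j, i < j → Y i j = 0)
    (h01 : ∀ i j, Y i j = 0 ∨ Y i j = 1)
    (hdiag : ∀ i, Y i i = 1)
    (Z : Matrix (Fin n) (Fin n) ℝ) (hZ : Z = Y * Yᵀ) :
    ∀ μ ∈ spectrum ℝ Z, lam₀ ≤ μ := by
  intro μ hμ
  -- generic facts
  have hdp_nonneg : ∀ y : Fin n → ℝ, 0 ≤ y ⬝ᵥ y := by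
    intro y
    apply Finset.sum_nonneg
    intro k _
    exact mul_self_nonneg _
  have hdp_pos : ∀ y : Fin n → ℝ, y ≠ 0 → 0 < y ⬝ᵥ y := by
    intro y hy
    rcases lt_or_eq_of_le (hdp_nonneg y) with h | h
    · exact h
    · exact absurd (dotProduct_self_eq_zero.mp h.symm) hy
  -- quadratic form via the factorization
  have hquad : ∀ (W : Matrix (Fin n) (Fin n) ℝ) (y : Fin n → ℝ),
      y ⬝ᵥ ((W * Wᵀ) *ᵥ y) = (Wᵀ *ᵥ y) ⬝ᵥ (Wᵀ *ᵥ y) := by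
    intro W y
    rw [← Matrix.mulVec_mulVec, Matrix.dotProduct_mulVec, Matrix.mulVec_transpose]
  -- nonnegativity of lam₀
  have hlam₀nn : 0 ≤ lam₀ := by
    obtain ⟨v₀, hv₀, hev₀⟩ := IHM_spec_eig Z₀ lam₀ hlam₀.1
    have h1 : v₀ ⬝ᵥ (Z₀ *ᵥ v₀) = lam₀ * (v₀ ⬝ᵥ v₀) := by
      rw [hev₀, dotProduct_smul]; rfl
    have h2 : v₀ ⬝ᵥ (Z₀ *ᵥ v₀) = (Y₀ᵀ *ᵥ v₀) ⬝ᵥ (Y₀ᵀ *ᵥ v₀) := by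
      rw [hZ₀]; exact hquad Y₀ v₀
    have h3 := hdp_nonneg (Y₀ᵀ *ᵥ v₀)
    have h4 := hdp_pos v₀ hv₀
    nlinarith
  -- eigenvector for μ
  obtain ⟨v, hv, hev⟩ := IHM_spec_eig Z μ hμ
  set w : Fin n → ℝ := Yᵀ *ᵥ v with hw
  have key1 : μ * (v ⬝ᵥ v) = w ⬝ᵥ w := by
    have h1 : v ⬝ᵥ (Z *ᵥ v) = μ * (v ⬝ᵥ v) := by
      rw [hev, dotProduct_smul]; rfl
    have h2 : v ⬝ᵥ (Z *ᵥ v) = w ⬝ᵥ w := by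
      rw [hZ, hw]; exact hquad Y v
    linarith
  -- inverse facts
  obtain ⟨hYA, hAlow, hAdiag⟩ := IHM_inv_facts Y hlower hdiag
  have hAb := IHM_inv_bound Y hlower h01 hdiag
  -- v in terms of w
  have hvw : v = (Y⁻¹)ᵀ *ᵥ w := by
    rw [hw, Matrix.mulVec_mulVec, ← Matrix.transpose_mul, hYA, Matrix.transpose_one,
      Matrix.one_mulVec]
  -- the comparison vector
  set Bf : Fin n → Fin n → ℝ :=
    fun k l => if (k:ℕ) = (l:ℕ) then 1 else (Nat.fib ((k:ℕ) - (l:ℕ)) : ℝ) with hBf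
  have hBnn : ∀ k l, 0 ≤ Bf k l := by
    intro k l; rw [hBf]; dsimp only; split <;> positivity
  set v' : Fin n → ℝ := fun l => ∑ k, Bf k l * |w k| with hv'
  have hv'nn : ∀ l, 0 ≤ v' l := by
    intro l
    apply Finset.sum_nonneg
    intro k _
    exact mul_nonneg (hBnn k l) (abs_nonneg _)
  have hvv' : ∀ l, |v l| ≤ v' l := by
    intro l
    have hvl : v l = ∑ k, Y⁻¹ k l * w k := by
      rw [hvw]
      rfl
    rw [hvl, hv']
    calc |∑ k, Y⁻¹ k l * w k| ≤ ∑ k, |Y⁻¹ k l * w k| := Finset.abs_sum_le_sum_abs _ _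
      _ ≤ ∑ k, Bf k l * |w k| := by
          apply Finset.sum_le_sum
          intro k _
          rw [abs_mul]
          exact mul_le_mul_of_nonneg_right (hAb k l) (abs_nonneg _)
  -- the sign-twisted comparison vector
  set C : Matrix (Fin n) (Fin n) ℝ := Matrix.of fun i j : Fin n =>
    ((-1:ℝ))^((i:ℕ)+(j:ℕ)) * Bf i j with hCdef
  have hY₀C : Y₀ * C = 1 := IHM_Y0_inv n Y₀ hY₀
  have hCY₀ : C * Y₀ = 1 := mul_eq_one_comm.mp hY₀C
  set u : Fin n → ℝ := fun k => ((-1:ℝ))^((k:ℕ)) * |w k| with hu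
  set x : Fin n → ℝ := Cᵀ *ᵥ u with hx
  have hYx : Y₀ᵀ *ᵥ x = u := by
    rw [hx, Matrix.mulVec_mulVec, ← Matrix.transpose_mul, hCY₀, Matrix.transpose_one,
      Matrix.one_mulVec]
  have hxl : ∀ l, x l = ((-1:ℝ))^((l:ℕ)) * v' l := by
    intro l
    have : x l = ∑ k, C k l * u k := rfl
    rw [this, hv', Finset.mul_sum]
    apply Finset.sum_congr rfl
    intro k _
    have hsgn : ((-1:ℝ))^((k:ℕ)+(l:ℕ)) * ((-1:ℝ))^((k:ℕ)) = ((-1:ℝ))^((l:ℕ)) := by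
      rw [← pow_add]
      exact IHM_sign_eq (by omega)
    calc C k l * u k = (((-1:ℝ))^((k:ℕ)+(l:ℕ)) * ((-1:ℝ))^((k:ℕ))) * (Bf k l * |w k|) := by
          rw [hCdef, hu]; dsimp only [Matrix.of_apply]; ring
      _ = ((-1:ℝ))^((l:ℕ)) * (Bf k l * |w k|) := by rw [hsgn]
  have hxx : x ⬝ᵥ x = v' ⬝ᵥ v' := by
    apply Finset.sum_congr rfl
    intro l _
    rw [hxl l]
    have h2 : (((-1:ℝ))^((l:ℕ)))^2 = 1 := by
      rw [← pow_mul]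
      exact Even.neg_one_pow ⟨(l:ℕ), by ring⟩
    nlinarith [h2]
  have huu : u ⬝ᵥ u = w ⬝ᵥ w := by
    apply Finset.sum_congr rfl
    intro l _
    rw [hu]
    dsimp only
    have h2 : (((-1:ℝ))^((l:ℕ)))^2 = 1 := by
      rw [← pow_mul]
      exact Even.neg_one_pow ⟨(l:ℕ), by ring⟩
    have h3 : |w l| * |w l| = w l * w l := abs_mul_abs_self _
    nlinarith [h2, h3]
  have hvx : v ⬝ᵥ v ≤ x ⬝ᵥ x := by
    rw [hxx]
    apply Finset.sum_le_sum
    intro l _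
    calc v l * v l = |v l| * |v l| := (abs_mul_abs_self _).symm
      _ ≤ v' l * v' l := mul_self_le_mul_self (abs_nonneg _) (hvv' l)
  -- Rayleigh bound for Z₀ at x
  have hZ₀herm : Z₀.IsHermitian := by
    have hct : Y₀ᴴ = Y₀ᵀ := by
      ext a b; simp [Matrix.conjTranspose_apply]
    rw [hZ₀, ← hct]
    exact Matrix.isHermitian_mul_conjTranspose_self Y₀
  have hray := IHM_rayleigh Z₀ hZ₀herm lam₀ (fun ν hν => hlam₀.2 hν) x
  have hxZx : x ⬝ᵥ (Z₀ *ᵥ x) = w ⬝ᵥ w := by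
    rw [hZ₀, hquad Y₀ x, hYx, huu]
  -- conclude
  have hchain : lam₀ * (v ⬝ᵥ v) ≤ μ * (v ⬝ᵥ v) := by
    calc lam₀ * (v ⬝ᵥ v) ≤ lam₀ * (x ⬝ᵥ x) := mul_le_mul_of_nonneg_left hvx hlam₀nn
      _ ≤ x ⬝ᵥ (Z₀ *ᵥ x) := hray
      _ = w ⬝ᵥ w := hxZx
      _ = μ * (v ⬝ᵥ v) := key1.symm
  exact le_of_mul_le_mul_right (by linarith) (hdp_pos v hv)
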